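/- Let 𝒜 be an adequate family of subsets of ℕ containing a two-element set {m, n}, and let h_{𝒜,1} be the Banach space generated by 𝒜. Then the point x = (e_m + e_n)/2 is not a super alternative Daugavet point: setting y = (e_m - e_n)/2, for every net (y_α) in the unit ball converging weakly to y, we have limsup_α max_{θ∈{-1,1}} ‖x + θ y_α‖ < 2; in particular limsup_α max_{θ∈{-1,1}} ‖x + θ y_α‖ ≤ max{3/2, √2}. -/
import Mathlib

open Metric Filter Topology

private lemma bdd_aux (𝒜 : Set (Set ℕ)) (c : ℕ →₀ ℝ) :
    BddAbove {r | ∃ F : Finset ℕ, (↑F : Set ℕ) ∈ 𝒜 ∧ r = ∑ k ∈ F, |c k|} := by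
  refine ⟨∑ k ∈ c.support, |c k|, ?_⟩
  rintro r ⟨F, -, rfl⟩
  calc ∑ k ∈ F, |c k| ≤ ∑ k ∈ F ∪ c.support, |c k| :=
        Finset.sum_le_sum_of_subset_of_nonneg Finset.subset_union_left
          (fun _ _ _ => abs_nonneg _)
    _ = ∑ k ∈ c.support, |c k| := by
        refine (Finset.sum_subset Finset.subset_union_right ?_).symm
        intro k _ hk
        rw [Finsupp.notMem_support_iff.1 hk, abs_zero]

private lemma key_bound {X : Type*} [NormedAddCommGroup X] [NormedSpace ℝ X]
    (𝒜 : Set (Set ℕ)) (hempty : (∅ : Set ℕ) ∈ 𝒜) (e : ℕ → X)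
    (hnorm : ∀ c : ℕ →₀ ℝ, ‖c.sum fun k a => a • e k‖ =
      sSup {r | ∃ F : Finset ℕ, (↑F : Set ℕ) ∈ 𝒜 ∧ r = ∑ k ∈ F, |c k|})
    (m n : ℕ) (hmn : m ≠ n) (c : ℕ →₀ ℝ) (ε : ℝ) (hε : 0 < ε) (hε8 : ε ≤ 1/8)
    (hc : ‖c.sum fun k a => a • e k‖ ≤ 1 + ε)
    (hcn : |c n + 2⁻¹| ≤ 2 * ε) :
    ‖(2:ℝ)⁻¹ • (e m + e n) + c.sum fun k a => a • e k‖ ≤ 3/2 + ε := by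
  classical
  set L := Finsupp.linearCombination ℝ e with hLdef
  have happ : ∀ c' : ℕ →₀ ℝ, (c'.sum fun k a => a • e k) = L c' := fun _ => rfl
  set d : ℕ →₀ ℝ := (Finsupp.single m 2⁻¹ + Finsupp.single n 2⁻¹) + c with hd
  have hdm : d m = 2⁻¹ + c m := by
    simp [hd, Finsupp.single_apply, (Ne.symm hmn)]
  have hdn : d n = 2⁻¹ + c n := by
    simp [hd, Finsupp.single_apply, hmn]
  have hdk : ∀ k, k ≠ m → k ≠ n → d k = c k := by
    intro k h1 h2
    simp [hd, Finsupp.single_apply, Ne.symm h1, Ne.symm h2]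
  have hgoal_eq : (2:ℝ)⁻¹ • (e m + e n) + (c.sum fun k a => a • e k)
      = d.sum fun k a => a • e k := by
    rw [happ c, happ d, hd, map_add, map_add, Finsupp.linearCombination_single,
      Finsupp.linearCombination_single, smul_add]
  rw [hgoal_eq, hnorm d]
  refine csSup_le ⟨0, ⟨∅, by simpa using hempty, by simp⟩⟩ ?_
  rintro r ⟨F, hF, rfl⟩
  have hT : ∑ k ∈ F, |c k| ≤ 1 + ε := by
    rw [hnorm c] at hc
    exact le_trans (le_csSup (bdd_aux 𝒜 c) ⟨F, hF, rfl⟩) hc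
  have hterm : ∀ k, |d k| - |c k| ≤ (if k = m then (2:ℝ)⁻¹ else 0) := by
    intro k
    by_cases hk : k = m
    · subst hk
      rw [if_pos rfl, hdm]
      have := abs_add_le (2⁻¹ : ℝ) (c k)
      have h2 : |(2:ℝ)⁻¹| = 2⁻¹ := by norm_num
      linarith
    · rw [if_neg hk]
      by_cases hk' : k = n
      · subst hk'
        rw [hdn]
        have h1 : |(2:ℝ)⁻¹ + c k| = |c k + 2⁻¹| := by rw [add_comm]
        have h2 := abs_add_le (c k + 2⁻¹) (-(c k))
        have h4 : c k + 2⁻¹ + -(c k) = 2⁻¹ := by ring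
        rw [h4, abs_neg] at h2
        have h3 : |(2:ℝ)⁻¹| = 2⁻¹ := by norm_num
        rw [h3] at h2
        linarith
      · rw [hdk k hk hk']
        simp
  have hsum : ∑ k ∈ F, |d k| ≤ ∑ k ∈ F, (|c k| + (if k = m then (2:ℝ)⁻¹ else 0)) :=
    Finset.sum_le_sum (fun k _ => by have := hterm k; linarith)
  rw [Finset.sum_add_distrib, Finset.sum_ite_eq' F m (fun _ => (2:ℝ)⁻¹)] at hsum
  have hite : (if m ∈ F then (2:ℝ)⁻¹ else 0) ≤ 2⁻¹ := by split_ifs <;> norm_num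
  linarith

private lemma coord_functional {X : Type*} [NormedAddCommGroup X] [NormedSpace ℝ X]
    (𝒜 : Set (Set ℕ)) (hsingle : ∀ k : ℕ, ({k} : Set ℕ) ∈ 𝒜) (e : ℕ → X)
    (hnorm : ∀ c : ℕ →₀ ℝ, ‖c.sum fun k a => a • e k‖ =
      sSup {r | ∃ F : Finset ℕ, (↑F : Set ℕ) ∈ 𝒜 ∧ r = ∑ k ∈ F, |c k|})
    (bdd_aux : ∀ c : ℕ →₀ ℝ,
      BddAbove {r | ∃ F : Finset ℕ, (↑F : Set ℕ) ∈ 𝒜 ∧ r = ∑ k ∈ F, |c k|})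
    (k : ℕ) :
    ∃ g : X →L[ℝ] ℝ, ‖g‖ ≤ 1 ∧
      ∀ c : ℕ →₀ ℝ, g (Finsupp.linearCombination ℝ e c) = c k := by
  classical
  set L := Finsupp.linearCombination ℝ e with hLdef
  have hcoord : ∀ (c : ℕ →₀ ℝ) (j : ℕ), |c j| ≤ ‖L c‖ := by
    intro c j
    have : ‖L c‖ = ‖c.sum fun k a => a • e k‖ := rfl
    rw [this, hnorm]
    exact le_csSup (bdd_aux c) ⟨{j}, by simpa using hsingle j, (Finset.sum_singleton _ _).symm⟩
  have hinj : Function.Injective L := by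
    intro a b hab
    ext j
    have h1 := hcoord (a - b) j
    rw [map_sub, hab, sub_self, norm_zero] at h1
    have h2 : (a - b) j = 0 := abs_nonpos_iff.mp h1
    rw [Finsupp.sub_apply] at h2
    linarith
  set E := LinearEquiv.ofInjective L hinj with hE
  set φ : LinearMap.range L →ₗ[ℝ] ℝ := (Finsupp.lapply k) ∘ₗ (E.symm : _ →ₗ[ℝ] _) with hφ
  have hbound : ∀ z : LinearMap.range L, ‖φ z‖ ≤ 1 * ‖(z : X)‖ := by
    intro z
    have h1 : L (E.symm z) = (z : X) := LinearEquiv.ofInjective_symm_apply (f := L) (h := hinj) z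
    have h2 := hcoord (E.symm z) k
    rw [h1] at h2
    simpa [hφ, Real.norm_eq_abs] using h2
  set F : LinearMap.range L →L[ℝ] ℝ := LinearMap.mkContinuous φ 1 hbound with hF
  obtain ⟨g, hg1, hg2⟩ := exists_extension_norm_eq (LinearMap.range L) F
  refine ⟨g, ?_, ?_⟩
  · rw [hg2]; exact LinearMap.mkContinuous_norm_le _ zero_le_one _
  · intro c
    have h1 : g (L c) = F ⟨L c, LinearMap.mem_range_self L c⟩ :=
      hg1 ⟨L c, LinearMap.mem_range_self L c⟩
    rw [h1]
    have h2 : E.symm ⟨L c, LinearMap.mem_range_self L c⟩ = c := by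
      rw [LinearEquiv.symm_apply_eq]
      exact Subtype.ext (LinearEquiv.ofInjective_apply L (h := hinj) c).symm
    show φ _ = c k
    rw [hφ]
    simp [h2]

/-- **Adequate-family spaces fail the super alternative Daugavet property at
`x = (e_m + e_n)/2`.** Let `𝒜` be an adequate family of subsets of `ℕ` (containing all
singletons, hereditary, and pointwise compact) containing a two-element set `{m, n}`, and let
`X = h_{𝒜,1}` be the associated Banach space: the completion of `c₀₀` under
`‖(a_k)‖ = sup_{A ∈ 𝒜} ∑_{k ∈ A} |a_k|`, with canonical basis `(e_k)`. Set
`x = (e_m + e_n)/2` and `y = (e_m - e_n)/2`. Then for every net `(y_α)` in the unit ball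
converging weakly to `y`,
`limsup_α max_{θ ∈ {-1,1}} ‖x + θ y_α‖ ≤ max (3/2) (√2) < 2`;
in particular `x` is not a super alternative Daugavet point. -/
theorem adequate_family_not_super_ADP_point
    {X : Type*} [NormedAddCommGroup X] [NormedSpace ℝ X] [CompleteSpace X]
    (𝒜 : Set (Set ℕ))
    (hsingle : ∀ k : ℕ, ({k} : Set ℕ) ∈ 𝒜)
    (hhered : ∀ A ∈ 𝒜, ∀ B ⊆ A, B ∈ 𝒜)
    (hcompact : ∀ A : Set ℕ, (∀ F : Finset ℕ, ↑F ⊆ A → (↑F : Set ℕ) ∈ 𝒜) → A ∈ 𝒜)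
    (e : ℕ → X)
    (hnorm : ∀ c : ℕ →₀ ℝ, ‖c.sum fun k a => a • e k‖ =
      sSup {r | ∃ F : Finset ℕ, (↑F : Set ℕ) ∈ 𝒜 ∧ r = ∑ k ∈ F, |c k|})
    (hdense : DenseRange fun c : ℕ →₀ ℝ => c.sum fun k a => a • e k)
    (m n : ℕ) (hmn : m ≠ n) (hmemA : ({m, n} : Set ℕ) ∈ 𝒜)
    {ι : Type*} (l : Filter ι) (hl : l.NeBot) (yα : ι → X)
    (hball : ∀ α, ‖yα α‖ ≤ 1)
    (hweak : ∀ g : X →L[ℝ] ℝ, Tendsto (fun α => g (yα α)) l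
      (𝓝 (g ((2 : ℝ)⁻¹ • (e m - e n))))) :
    limsup (fun α => max ‖(2 : ℝ)⁻¹ • (e m + e n) + yα α‖
        ‖(2 : ℝ)⁻¹ • (e m + e n) - yα α‖) l ≤ max (3 / 2) (Real.sqrt 2) ∧
    limsup (fun α => max ‖(2 : ℝ)⁻¹ • (e m + e n) + yα α‖
        ‖(2 : ℝ)⁻¹ • (e m + e n) - yα α‖) l < 2 := by
  classical
  set L := Finsupp.linearCombination ℝ e with hLdef
  have happ : ∀ c : ℕ →₀ ℝ, (c.sum fun k a => a • e k) = L c := fun _ => rfl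
  set x : X := (2 : ℝ)⁻¹ • (e m + e n) with hx
  set f : ι → ℝ := fun α => max ‖x + yα α‖ ‖x - yα α‖ with hfdef
  have hempty : (∅ : Set ℕ) ∈ 𝒜 := hhered {0} (hsingle 0) ∅ (Set.empty_subset _)
  obtain ⟨gm, hgm1, hgm2⟩ := coord_functional 𝒜 hsingle e hnorm (bdd_aux 𝒜) m
  obtain ⟨gn, hgn1, hgn2⟩ := coord_functional 𝒜 hsingle e hnorm (bdd_aux 𝒜) n
  -- the weak limit y and its coordinates
  set cy : ℕ →₀ ℝ := (2:ℝ)⁻¹ • (Finsupp.single m 1 - Finsupp.single n 1) with hcy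
  have hLcy : L cy = (2 : ℝ)⁻¹ • (e m - e n) := by
    rw [hcy, map_smul, map_sub, Finsupp.linearCombination_single,
      Finsupp.linearCombination_single, one_smul, one_smul]
  have hcym : cy m = 2⁻¹ := by
    simp [hcy, Finsupp.single_apply, Ne.symm hmn]
  have hcyn : cy n = -2⁻¹ := by
    simp [hcy, Finsupp.single_apply, hmn]
  have htm : Tendsto (fun α => gm (yα α)) l (𝓝 (2⁻¹ : ℝ)) := by
    have := hweak gm
    rwa [← hLcy, hgm2 cy, hcym] at this
  have htn : Tendsto (fun α => gn (yα α)) l (𝓝 (-2⁻¹ : ℝ)) := by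
    have := hweak gn
    rwa [← hLcy, hgn2 cy, hcyn] at this
  -- eventual bound
  have hev : ∀ ε : ℝ, 0 < ε → ε ≤ 1/8 → ∀ᶠ α in l, f α ≤ 3/2 + 2*ε := by
    intro ε hε hε8
    have h1 : ∀ᶠ α in l, |gm (yα α) - 2⁻¹| < ε/2 := by
      have := Metric.tendsto_nhds.1 htm (ε/2) (by positivity)
      simpa [Real.dist_eq] using this
    have h2 : ∀ᶠ α in l, |gn (yα α) + 2⁻¹| < ε/2 := by
      have := Metric.tendsto_nhds.1 htn (ε/2) (by positivity)
      simpa [Real.dist_eq, sub_neg_eq_add] using this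
    filter_upwards [h1, h2] with α ham han
    obtain ⟨c, hcdist⟩ : ∃ c : ℕ →₀ ℝ, dist (yα α) (L c) < ε/2 :=
      Metric.mem_closure_range_iff.1 (hdense (yα α)) (ε/2) (by positivity)
    rw [dist_eq_norm] at hcdist
    have hz2 : ‖L c - yα α‖ < ε/2 := by rwa [norm_sub_rev] at hcdist
    have hLc : ‖L c‖ ≤ 1 + ε := by
      have := norm_sub_norm_le (L c) (yα α)
      have hb := hball α
      linarith
    have hgapprox : ∀ (g : X →L[ℝ] ℝ), ‖g‖ ≤ 1 → |g (L c) - g (yα α)| ≤ ε/2 := by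
      intro g hg
      have h3 := g.le_opNorm (L c - yα α)
      rw [map_sub] at h3
      have h4 : ‖g (L c) - g (yα α)‖ = |g (L c) - g (yα α)| := Real.norm_eq_abs _
      nlinarith [norm_nonneg (L c - yα α)]
    have hcn : |c n + 2⁻¹| ≤ 2 * ε := by
      have h3 := hgapprox gn hgn1
      rw [hgn2 c] at h3
      have h4 := abs_add_le (c n - gn (yα α)) (gn (yα α) + 2⁻¹)
      have h5 : c n - gn (yα α) + (gn (yα α) + 2⁻¹) = c n + 2⁻¹ := by ring
      rw [h5] at h4
      have h6 : |c n - gn (yα α)| = |gn (L c) - gn (yα α)| := by rw [hgn2 c]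
      linarith [abs_sub_comm (c n) (gn (yα α))]
    have hcm : |c m - 2⁻¹| ≤ 2 * ε := by
      have h3 := hgapprox gm hgm1
      rw [hgm2 c] at h3
      have h4 := abs_add_le (c m - gm (yα α)) (gm (yα α) - 2⁻¹)
      have h5 : c m - gm (yα α) + (gm (yα α) - 2⁻¹) = c m - 2⁻¹ := by ring
      rw [h5] at h4
      linarith
    have hkey1 : ‖x + L c‖ ≤ 3/2 + ε := by
      have := key_bound 𝒜 hempty e hnorm m n hmn c ε hε hε8 (by rw [happ]; exact hLc) hcn
      rwa [happ] at this
    have hkey2 : ‖x - L c‖ ≤ 3/2 + ε := by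
      have hneg : ‖(-c : ℕ →₀ ℝ).sum fun k a => a • e k‖ ≤ 1 + ε := by
        rw [happ, map_neg, norm_neg]; exact hLc
      have hnegm : |(-c : ℕ →₀ ℝ) m + 2⁻¹| ≤ 2 * ε := by
        have : (-c : ℕ →₀ ℝ) m + 2⁻¹ = -(c m - 2⁻¹) := by
          rw [Finsupp.neg_apply]; ring
        rw [this, abs_neg]; exact hcm
      have := key_bound 𝒜 hempty e hnorm n m (Ne.symm hmn) (-c) ε hε hε8 hneg hnegm
      rw [happ, map_neg] at this
      have hx2 : x - L c = (2:ℝ)⁻¹ • (e n + e m) + -(L c) := by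
        rw [hx, add_comm (e n) (e m), sub_eq_add_neg]
      rw [hx2]
      exact this
    have hfin1 : ‖x + yα α‖ ≤ 3/2 + 2*ε := by
      have heq : x + yα α = (x + L c) + (yα α - L c) := by abel
      rw [heq]
      have := norm_add_le (x + L c) (yα α - L c)
      linarith
    have hfin2 : ‖x - yα α‖ ≤ 3/2 + 2*ε := by
      have heq : x - yα α = (x - L c) - (yα α - L c) := by abel
      rw [heq]
      have := norm_sub_le (x - L c) (yα α - L c)
      linarith
    exact max_le hfin1 hfin2
  have hcob : IsCoboundedUnder (· ≤ ·) l f :=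
    isCoboundedUnder_le_of_le l (x := 0)
      (fun α => le_max_of_le_left (norm_nonneg _))
  have hlimsup : limsup f l ≤ 3/2 := by
    refine le_of_forall_pos_le_add ?_
    intro ε hε
    have hδpos : 0 < min (ε/4) (1/8) := lt_min (by positivity) (by norm_num)
    have hb := limsup_le_of_le hcob (hev _ hδpos (min_le_right _ _))
    have : 3/2 + 2 * min (ε/4) (1/8) ≤ 3/2 + ε := by
      have := min_le_left (ε/4) (1/8)
      linarith
    linarith
  constructor
  · exact le_trans hlimsup (le_max_left _ _)
  · exact lt_of_le_of_lt hlimsup (by norm_num)
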